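/- Let d ≥ 2 be an integer and let K, L, M, N be Hermitian matrices on ℂ^{d_Â}⊗ℂ^{d_B̂}. On the space with tensor factors A, B, Â, B̂, A', B' (A, B, A', B' each of dimension d), define L̃ := Φ_{AB'}⊗Φ_{BA'}⊗K + Φ_{AB'}⊗((I−Φ)_{BA'}/(d²−1))⊗L + ((I−Φ)_{AB'}/(d²−1))⊗Φ_{BA'}⊗M + ((I−Φ)_{AB'}/(d²−1))⊗((I−Φ)_{BA'}/(d²−1))⊗N, where Φ_{AB'} denotes the maximally entangled state placed on the factors A and B', and Φ_{BA'} that placed on B and A'. Then L̃ is positive semidefinite and Tr_{A'B'}[L̃] = I_{ABÂB̂} if and only if K, L, M, N are all positive semidefinite and K + L + M + N = d²·I. -/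

import Mathlib

open Matrix Kronecker
open scoped ComplexOrder

noncomputable section

/-- The square root of a positive semidefinite matrix, as `Matrix.PosSemidef.sqrt` was defined
in the older Mathlib. -/
def psdSqrt {n : Type*} [Fintype n] [DecidableEq n] {A : Matrix n n ℂ} (hA : A.PosSemidef) :
    Matrix n n ℂ :=
  (hA.1.eigenvectorUnitary : Matrix n n ℂ) * diagonal ((↑) ∘ (Real.sqrt ·) ∘ hA.1.eigenvalues) *
    (star hA.1.eigenvectorUnitary : Matrix n n ℂ)

/-- The trace norm `‖X‖₁ = Tr[√(X†X)]`. -/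
def traceNorm {n : Type*} [Fintype n] [DecidableEq n] (X : Matrix n n ℂ) : ℝ :=
  (psdSqrt (Matrix.posSemidef_conjTranspose_mul_self X)).trace.re

/-- The extension `id_k ⊗ Φ` of a map on matrices, with the identity on the first factor. -/
def idTensor {k n m : Type*} (Φ : Matrix n n ℂ → Matrix m m ℂ)
    (M : Matrix (k × n) (k × n) ℂ) : Matrix (k × m) (k × m) ℂ :=
  Matrix.of fun p q => Φ (Matrix.of fun a b => M (p.1, a) (q.1, b)) p.2 q.2

/-- A density matrix: positive semidefinite with unit trace. -/
def IsState {n : Type*} [Fintype n] (ρ : Matrix n n ℂ) : Prop :=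
  ρ.PosSemidef ∧ ρ.trace = 1

/-- Normalized diamond distance between two maps on matrices, as the supremum over
bipartite input states (with a reference system of the same dimension as the input)
of the normalized trace distance of the outputs. -/
def dDist {n m : Type*} [Fintype n] [DecidableEq n] [Fintype m] [DecidableEq m]
    (N M : Matrix n n ℂ → Matrix m m ℂ) : ℝ :=
  sSup {x : ℝ | ∃ ρ : Matrix (n × n) (n × n) ℂ, IsState ρ ∧
    x = (1 / 2) * traceNorm (idTensor N ρ - idTensor M ρ)}

/-- Complete positivity of a linear map on matrices: every finite identity extension
preserves positive semidefiniteness. -/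
def IsCP {n m : Type*} [Fintype n] [DecidableEq n] [Fintype m] [DecidableEq m]
    (Φ : Matrix n n ℂ →ₗ[ℂ] Matrix m m ℂ) : Prop :=
  ∀ (r : ℕ) (M : Matrix (Fin r × n) (Fin r × n) ℂ), M.PosSemidef →
    (idTensor (fun X => Φ X) M).PosSemidef

/-- Trace preservation of a linear map on matrices. -/
def IsTP {n m : Type*} [Fintype n] [Fintype m]
    (Φ : Matrix n n ℂ →ₗ[ℂ] Matrix m m ℂ) : Prop :=
  ∀ X, (Φ X).trace = X.trace

/-- Choi operator of a map on matrices: `Γ^Φ = Σ_{i,j} |i⟩⟨j| ⊗ Φ(|i⟩⟨j|)`. -/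
def choi {n m : Type*} [DecidableEq n]
    (Φ : Matrix n n ℂ → Matrix m m ℂ) : Matrix (n × m) (n × m) ℂ :=
  Matrix.of fun p q => Φ (Matrix.single p.1 q.1 1) p.2 q.2

/-- The swap operator `F = Σ_{i,j} |i⟩⟨j| ⊗ |j⟩⟨i|` on `ℂ^d ⊗ ℂ^d`. -/
def swapOp (d : ℕ) : Matrix (Fin d × Fin d) (Fin d × Fin d) ℂ :=
  Matrix.of fun p q => if p.1 = q.2 ∧ p.2 = q.1 then 1 else 0

/-- The swap channel `S^d(X) = F X F†`. -/
def swapCh (d : ℕ) (X : Matrix (Fin d × Fin d) (Fin d × Fin d) ℂ) :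
    Matrix (Fin d × Fin d) (Fin d × Fin d) ℂ :=
  swapOp d * X * (swapOp d)ᴴ

/-- Square root of a positive semidefinite matrix (junk value `0` otherwise). -/
def msqrt {n : Type*} [Fintype n] [DecidableEq n] (X : Matrix n n ℂ) : Matrix n n ℂ :=
  letI := Classical.propDecidable X.PosSemidef
  if h : X.PosSemidef then psdSqrt h else 0

/-- Fidelity `F(ω,τ) = ‖√ω √τ‖₁²`. -/
def fid {n : Type*} [Fintype n] [DecidableEq n] (ω τ : Matrix n n ℂ) : ℝ :=
  (traceNorm (msqrt ω * msqrt τ)) ^ 2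

/-- Channel fidelity: the infimum of output fidelities over bipartite input states. -/
def cFid {n m : Type*} [Fintype n] [DecidableEq n] [Fintype m] [DecidableEq m]
    (N M : Matrix n n ℂ → Matrix m m ℂ) : ℝ :=
  sInf {x : ℝ | ∃ ρ : Matrix (n × n) (n × n) ℂ, IsState ρ ∧
    x = fid (idTensor N ρ) (idTensor M ρ)}

/-- Partial trace over the second (right) factor. -/
def ptrR {a b : Type*} [Fintype b] (X : Matrix (a × b) (a × b) ℂ) : Matrix a a ℂ :=
  Matrix.of fun i j => ∑ k, X (i, k) (j, k)

/-- Unnormalized maximally entangled operator `Γ = |Γ⟩⟨Γ|` on `ℂ^D ⊗ ℂ^D`. -/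
def gamOp (D : ℕ) : Matrix (Fin D × Fin D) (Fin D × Fin D) ℂ :=
  Matrix.of fun p q => if p.1 = p.2 ∧ q.1 = q.2 then 1 else 0

/-- Maximally entangled state `Φ = Γ/D` on `ℂ^D ⊗ ℂ^D`. -/
def phiD (D : ℕ) : Matrix (Fin D × Fin D) (Fin D × Fin D) ℂ :=
  ((D : ℂ))⁻¹ • gamOp D

/-- Partial transpose over Bob's factors `B, B̂, B'` of a matrix on the six factors
`(A ⊗ B) ⊗ (Â ⊗ B̂) ⊗ (A' ⊗ B')`. -/
def ptB6 {A B AH BH A' B' : Type*}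
    (X : Matrix (((A × B) × (AH × BH)) × (A' × B')) (((A × B) × (AH × BH)) × (A' × B')) ℂ) :
    Matrix (((A × B) × (AH × BH)) × (A' × B')) (((A × B) × (AH × BH)) × (A' × B')) ℂ :=
  Matrix.of fun p q =>
    X (((p.1.1.1, q.1.1.2), (p.1.2.1, q.1.2.2)), (p.2.1, q.2.2))
      (((q.1.1.1, p.1.1.2), (q.1.2.1, p.1.2.2)), (q.2.1, p.2.2))

/-- Partial transpose over the factor `B̂` of a matrix on `Â ⊗ B̂`. -/
def ptBh2 {AH BH : Type*} (X : Matrix (AH × BH) (AH × BH) ℂ) : Matrix (AH × BH) (AH × BH) ℂ :=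
  Matrix.of fun g g' => X (g.1, g'.2) (g'.1, g.2)

/-- Contraction `Tr_{ÂB̂}[(T_{ÂB̂}(ρ) ⊗ I) P]` of a six-factor operator with a resource state,
yielding the Choi operator of the induced channel `ω ↦ P(ω ⊗ ρ)`. -/
def contractRes {A B AH BH A' B' : Type*} [Fintype AH] [Fintype BH]
    (ρ : Matrix (AH × BH) (AH × BH) ℂ)
    (P : Matrix (((A × B) × (AH × BH)) × (A' × B')) (((A × B) × (AH × BH)) × (A' × B')) ℂ) :
    Matrix ((A × B) × (A' × B')) ((A × B) × (A' × B')) ℂ :=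
  Matrix.of fun p q => ∑ h, ∑ h', ρ h h' * P ((p.1, h), p.2) ((q.1, h'), q.2)


/-- The six-factor operator `E1_{AB'} ⊗ E1_{BA'} ⊗ K + E1_{AB'} ⊗ E2_{BA'} ⊗ L
+ E2_{AB'} ⊗ E1_{BA'} ⊗ M + E2_{AB'} ⊗ E2_{BA'} ⊗ N` on the factors
`A, B, Â, B̂, A', B'` (with `E1, E2` placed on the indicated pairs of factors). -/
def bigOp (d : ℕ) {AH BH : Type*} (E1 E2 : Matrix (Fin d × Fin d) (Fin d × Fin d) ℂ)
    (K L M N : Matrix (AH × BH) (AH × BH) ℂ) :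
    Matrix (((Fin d × Fin d) × (AH × BH)) × (Fin d × Fin d))
      (((Fin d × Fin d) × (AH × BH)) × (Fin d × Fin d)) ℂ :=
  Matrix.of fun r c =>
    E1 (r.1.1.1, r.2.2) (c.1.1.1, c.2.2) * E1 (r.1.1.2, r.2.1) (c.1.1.2, c.2.1) * K r.1.2 c.1.2
    + E1 (r.1.1.1, r.2.2) (c.1.1.1, c.2.2) * E2 (r.1.1.2, r.2.1) (c.1.1.2, c.2.1) * L r.1.2 c.1.2
    + E2 (r.1.1.1, r.2.2) (c.1.1.1, c.2.2) * E1 (r.1.1.2, r.2.1) (c.1.1.2, c.2.1) * M r.1.2 c.1.2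
    + E2 (r.1.1.1, r.2.2) (c.1.1.1, c.2.2) * E2 (r.1.1.2, r.2.1) (c.1.1.2, c.2.1) * N r.1.2 c.1.2

-- ===== auxiliary lemmas =====

lemma prod_dot' {m n : Type*} [Fintype m] [Fintype n]
    (f f' : m → ℂ) (g g' : n → ℂ) :
    (fun p : m × n => f p.1 * g p.2) ⬝ᵥ (fun p : m × n => f' p.1 * g' p.2)
      = (f ⬝ᵥ f') * (g ⬝ᵥ g') := by
  simp only [dotProduct, Fintype.sum_prod_type, Finset.sum_mul_sum]
  exact Finset.sum_congr rfl fun p _ => Finset.sum_congr rfl fun q _ => by ring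

lemma kron_mulVec' {m n : Type*} [Fintype m] [Fintype n]
    (A : Matrix m m ℂ) (B : Matrix n n ℂ) (x : m → ℂ) (y : n → ℂ) :
    (A ⊗ₖ B).mulVec (fun p => x p.1 * y p.2)
      = fun p : m × n => A.mulVec x p.1 * B.mulVec y p.2 := by
  funext ⟨i, j⟩
  simp only [mulVec, dotProduct, Fintype.sum_prod_type, kroneckerMap_apply,
    Finset.sum_mul_sum]
  exact Finset.sum_congr rfl fun p _ => Finset.sum_congr rfl fun q _ => by ring

lemma starProd' {m n : Type*} (x : m → ℂ) (y : n → ℂ) :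
    (star (fun p : m × n => x p.1 * y p.2)) = fun p : m × n => star x p.1 * star y p.2 := by
  funext p; simp [mul_comm]

lemma kron_quad' {m n : Type*} [Fintype m] [Fintype n]
    (A : Matrix m m ℂ) (B : Matrix n n ℂ) (x : m → ℂ) (y : n → ℂ) :
    star (fun p : m × n => x p.1 * y p.2) ⬝ᵥ (A ⊗ₖ B).mulVec (fun p => x p.1 * y p.2)
      = (star x ⬝ᵥ A.mulVec x) * (star y ⬝ᵥ B.mulVec y) := by
  rw [starProd', kron_mulVec']
  exact prod_dot' _ _ _ _

lemma kron_conjTranspose' {m n : Type*} (A : Matrix m m ℂ) (B : Matrix n n ℂ) :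
    (A ⊗ₖ B)ᴴ = Aᴴ ⊗ₖ Bᴴ := by
  ext ⟨i, j⟩ ⟨k, l⟩
  simp [conjTranspose_apply, kroneckerMap_apply, mul_comm]

lemma psd_kron' {m n : Type*} [Fintype m] [Fintype n] [DecidableEq m] [DecidableEq n]
    {A : Matrix m m ℂ} {B : Matrix n n ℂ}
    (hA : A.PosSemidef) (hB : B.PosSemidef) : (A ⊗ₖ B).PosSemidef := by
  exact hA.kronecker hB

lemma gam_mul_gam (D : ℕ) : gamOp D * gamOp D = (D : ℂ) • gamOp D := by
  ext p q
  simp only [mul_apply, gamOp, of_apply, Matrix.smul_apply, smul_eq_mul]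
  rw [Finset.sum_congr rfl (fun r _ => by
    rw [show ((if p.1 = p.2 ∧ r.1 = r.2 then (1:ℂ) else 0) *
      (if r.1 = r.2 ∧ q.1 = q.2 then 1 else 0)) =
      if r.1 = r.2 then (if p.1 = p.2 ∧ q.1 = q.2 then 1 else 0) else 0 by
        by_cases h1 : r.1 = r.2 <;> by_cases h2 : p.1 = p.2 <;> by_cases h3 : q.1 = q.2 <;>
          simp [h1, h2, h3]])]
  rw [Fintype.sum_prod_type]
  simp [Finset.sum_ite_eq]

lemma gam_herm (D : ℕ) : (gamOp D).IsHermitian := by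
  ext p q
  simp only [conjTranspose_apply, gamOp, of_apply]
  by_cases h1 : p.1 = p.2 <;> by_cases h2 : q.1 = q.2 <;> simp [h1, h2, and_comm]

lemma phi_herm (D : ℕ) : (phiD D).IsHermitian := by
  show _ = _
  unfold phiD
  rw [conjTranspose_smul, (gam_herm D).eq]
  congr 1
  simp

lemma phi_idem (D : ℕ) (hD : D ≠ 0) : phiD D * phiD D = phiD D := by
  unfold phiD
  rw [smul_mul_assoc, Matrix.mul_smul, gam_mul_gam, smul_smul, smul_smul]
  congr 1
  field_simp

lemma phi_psd (D : ℕ) (hD : D ≠ 0) : (phiD D).PosSemidef := by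
  have h : phiD D = (phiD D)ᴴ * phiD D := by
    rw [(phi_herm D).eq, phi_idem D hD]
  rw [h]; exact Matrix.posSemidef_conjTranspose_mul_self _

lemma one_sub_phi_psd (D : ℕ) (hD : D ≠ 0) :
    ((1 : Matrix (Fin D × Fin D) (Fin D × Fin D) ℂ) - phiD D).PosSemidef := by
  have hh : ((1 : Matrix (Fin D × Fin D) (Fin D × Fin D) ℂ) - phiD D).IsHermitian :=
    IsHermitian.sub (isHermitian_one) (phi_herm D)
  have h : (1 - phiD D) =
      ((1 : Matrix (Fin D × Fin D) (Fin D × Fin D) ℂ) - phiD D)ᴴ * (1 - phiD D) := by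
    rw [hh.eq, sub_mul, mul_sub, mul_sub, one_mul, mul_one, one_mul, phi_idem D hD]
    abel
  rw [h]; exact Matrix.posSemidef_conjTranspose_mul_self _

lemma ptr_phi (D : ℕ) (a a₂ : Fin D) :
    ∑ k : Fin D, phiD D (a, k) (a₂, k) = (D : ℂ)⁻¹ * (if a = a₂ then 1 else 0) := by
  simp only [phiD, gamOp, Matrix.smul_apply, of_apply, smul_eq_mul, ← Finset.mul_sum]
  congr 1
  by_cases h : a = a₂
  · subst h; simp
  · simp [h, fun k => show ¬(a = k ∧ a₂ = k) from fun ⟨h1, h2⟩ => h (h1.trans h2.symm)]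

lemma ptr_one (D : ℕ) (a a₂ : Fin D) :
    ∑ k : Fin D, (1 : Matrix (Fin D × Fin D) (Fin D × Fin D) ℂ) (a, k) (a₂, k)
      = (D : ℂ) * (if a = a₂ then 1 else 0) := by
  simp only [one_apply, Prod.mk.injEq]
  by_cases h : a = a₂
  · simp [h]
  · simp [h]

lemma ptr_E2 (D : ℕ) (hD : 2 ≤ D) (a a₂ : Fin D) :
    ∑ k : Fin D, ((((D : ℂ)) ^ 2 - 1)⁻¹ • ((1 : Matrix (Fin D × Fin D) (Fin D × Fin D) ℂ)
        - phiD D)) (a, k) (a₂, k) = (D : ℂ)⁻¹ * (if a = a₂ then 1 else 0) := by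
  have hD0 : (D : ℂ) ≠ 0 := Nat.cast_ne_zero.mpr (by omega)
  have hrpos : (0 : ℝ) < (D : ℝ) ^ 2 - 1 := by
    have h2 : (2 : ℝ) ≤ (D : ℝ) := by exact_mod_cast hD
    nlinarith
  have hc : ((D : ℂ) ^ 2 - 1) ≠ 0 := by
    rw [show ((D : ℂ) ^ 2 - 1) = (((D : ℝ) ^ 2 - 1 : ℝ) : ℂ) from by push_cast; ring]
    exact Complex.ofReal_ne_zero.mpr (ne_of_gt hrpos)
  simp only [Matrix.smul_apply, Matrix.sub_apply, smul_eq_mul]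
  rw [← Finset.mul_sum, Finset.sum_sub_distrib, ptr_one, ptr_phi]
  by_cases h : a = a₂
  · simp only [h, if_true, mul_one]
    field_simp
  · simp [h]

def gamV (D : ℕ) : Fin D × Fin D → ℂ := fun p => if p.1 = p.2 then 1 else 0

lemma gamV_dot (D : ℕ) : star (gamV D) ⬝ᵥ gamV D = (D : ℂ) := by
  simp only [dotProduct, gamV, Pi.star_apply, Fintype.sum_prod_type]
  simp [apply_ite, Finset.sum_ite_eq]

lemma phi_mulVec_gamV (D : ℕ) (hD : D ≠ 0) : (phiD D).mulVec (gamV D) = gamV D := by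
  have hD' : (D : ℂ) ≠ 0 := Nat.cast_ne_zero.mpr hD
  funext p
  simp only [mulVec, dotProduct, phiD, gamOp, Matrix.smul_apply, of_apply, smul_eq_mul, gamV,
    Fintype.sum_prod_type]
  rw [Finset.sum_congr rfl (fun i _ => Finset.sum_congr rfl (fun j _ => show
    (D:ℂ)⁻¹ * (if p.1 = p.2 ∧ i = j then 1 else 0) * (if i = j then (1:ℂ) else 0)
      = ((if p.1 = p.2 then (1:ℂ) else 0) * (D:ℂ)⁻¹) * (if i = j then 1 else 0) from by
    by_cases h1 : p.1 = p.2 <;> by_cases h2 : i = j <;> simp [h1, h2]))]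
  simp only [← Finset.mul_sum]
  rw [Finset.sum_congr rfl (fun i _ => Finset.sum_ite_eq Finset.univ i (fun _ => (1:ℂ)))]
  simp only [Finset.mem_univ, if_true, Finset.sum_const, Finset.card_univ, Fintype.card_fin,
    nsmul_eq_mul]
  field_simp

def eV (D : ℕ) (hD : 2 ≤ D) : Fin D × Fin D → ℂ :=
  fun p => if p.1 = ⟨0, by omega⟩ ∧ p.2 = ⟨1, by omega⟩ then 1 else 0

lemma eV_dot (D : ℕ) (hD : 2 ≤ D) : star (eV D hD) ⬝ᵥ eV D hD = 1 := by
  simp only [dotProduct, eV, Pi.star_apply, Fintype.sum_prod_type]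
  simp [apply_ite, Finset.sum_ite_eq, ite_and, Finset.sum_ite_eq']

lemma eV_diag (D : ℕ) (hD : 2 ≤ D) (i : Fin D) : eV D hD (i, i) = 0 := by
  simp only [eV]
  rw [if_neg]
  rintro ⟨h1, h2⟩
  rw [h1] at h2
  simp [Fin.ext_iff] at h2

lemma phi_mulVec_eV (D : ℕ) (hD : 2 ≤ D) : (phiD D).mulVec (eV D hD) = 0 := by
  funext p
  simp only [mulVec, dotProduct, phiD, gamOp, Matrix.smul_apply, of_apply, smul_eq_mul,
    Fintype.sum_prod_type, Pi.zero_apply]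
  rw [Finset.sum_congr rfl (fun i _ => Finset.sum_congr rfl (fun j _ => show
    (D:ℂ)⁻¹ * (if p.1 = p.2 ∧ i = j then 1 else 0) * eV D hD (i, j) = 0 from by
    by_cases h2 : i = j
    · subst h2; rw [eV_diag]; ring
    · simp [h2]))]
  simp

def reIdx (d : ℕ) (AH BH : Type*) :
    ((((Fin d × Fin d) × (AH × BH)) × (Fin d × Fin d))) ≃
      (((Fin d × Fin d) × (Fin d × Fin d)) × (AH × BH)) where
  toFun r := (((r.1.1.1, r.2.2), (r.1.1.2, r.2.1)), r.1.2)
  invFun s := (((s.1.1.1, s.1.2.1), s.2), (s.1.2.2, s.1.1.2))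
  left_inv := by rintro ⟨⟨⟨a, b⟩, h⟩, ⟨a', b'⟩⟩; rfl
  right_inv := by rintro ⟨⟨⟨a, b'⟩, ⟨b, a'⟩⟩, h⟩; rfl

lemma bigOp_eq (d : ℕ) {AH BH : Type*} (E1 E2 : Matrix (Fin d × Fin d) (Fin d × Fin d) ℂ)
    (K L M N : Matrix (AH × BH) (AH × BH) ℂ) :
    bigOp d E1 E2 K L M N =
      ((E1 ⊗ₖ E1) ⊗ₖ K + (E1 ⊗ₖ E2) ⊗ₖ L + (E2 ⊗ₖ E1) ⊗ₖ M + (E2 ⊗ₖ E2) ⊗ₖ N).submatrix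
        (reIdx d AH BH) (reIdx d AH BH) := by
  ext r c
  simp only [bigOp, of_apply, submatrix_apply, Matrix.add_apply, kroneckerMap_apply, reIdx,
    Equiv.coe_fn_mk]

lemma sum_fact {D : ℕ} (E F : Matrix (Fin D × Fin D) (Fin D × Fin D) ℂ)
    (a b a₂ b₂ : Fin D) (c : ℂ) :
    ∑ a' : Fin D, ∑ b' : Fin D, E (a, b') (a₂, b') * F (b, a') (b₂, a') * c
      = (∑ k, E (a, k) (a₂, k)) * (∑ k, F (b, k) (b₂, k)) * c := by
  rw [Finset.sum_comm, Finset.sum_mul_sum, Finset.sum_mul]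
  simp only [Finset.sum_mul]

lemma smul_nonneg'' {r : ℝ} (hr : 0 ≤ r) {z : ℂ} (hz : 0 ≤ z) : 0 ≤ (r : ℂ) * z := by
  rw [Complex.le_def] at hz ⊢
  simp only [Complex.zero_re, Complex.zero_im, Complex.mul_re, Complex.mul_im,
    Complex.ofReal_re, Complex.ofReal_im] at *
  constructor
  · nlinarith [hz.1]
  · rw [← hz.2]; ring

lemma pos_of_smul {a : ℝ} (ha : 0 < a) {z : ℂ} (h : 0 ≤ (a : ℂ) * z) : 0 ≤ z := by
  rw [Complex.le_def] at h ⊢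
  simp only [Complex.zero_re, Complex.zero_im, Complex.mul_re, Complex.mul_im,
    Complex.ofReal_re, Complex.ofReal_im] at *
  obtain ⟨h1, h2⟩ := h
  constructor
  · nlinarith
  · nlinarith [sq_nonneg z.im]

lemma psd_smul {n : Type*} [Fintype n] {A : Matrix n n ℂ} (hA : A.PosSemidef)
    {r : ℝ} (hr : 0 ≤ r) : ((r : ℂ) • A).PosSemidef := by
  refine .of_dotProduct_mulVec_nonneg ?_ ?_
  · show _ = _
    rw [conjTranspose_smul, hA.1.eq]
    congr 1
    simp
  · intro x
    rw [Matrix.smul_mulVec, dotProduct_smul, smul_eq_mul]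
    exact smul_nonneg'' hr (hA.dotProduct_mulVec_nonneg x)

lemma quadS {d : ℕ} {AH BH : Type*} [Fintype AH] [Fintype BH]
    (E1 E2 : Matrix (Fin d × Fin d) (Fin d × Fin d) ℂ)
    (K L M N : Matrix (AH × BH) (AH × BH) ℂ)
    (x y : Fin d × Fin d → ℂ) (v : AH × BH → ℂ) :
    star (fun p : ((Fin d × Fin d) × (Fin d × Fin d)) × (AH × BH) =>
        (fun q : (Fin d × Fin d) × (Fin d × Fin d) => x q.1 * y q.2) p.1 * v p.2) ⬝ᵥ
      ((E1 ⊗ₖ E1) ⊗ₖ K + (E1 ⊗ₖ E2) ⊗ₖ L + (E2 ⊗ₖ E1) ⊗ₖ M + (E2 ⊗ₖ E2) ⊗ₖ N).mulVec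
        (fun p => (fun q : (Fin d × Fin d) × (Fin d × Fin d) => x q.1 * y q.2) p.1 * v p.2)
      = (star x ⬝ᵥ E1.mulVec x) * (star y ⬝ᵥ E1.mulVec y) * (star v ⬝ᵥ K.mulVec v)
      + (star x ⬝ᵥ E1.mulVec x) * (star y ⬝ᵥ E2.mulVec y) * (star v ⬝ᵥ L.mulVec v)
      + (star x ⬝ᵥ E2.mulVec x) * (star y ⬝ᵥ E1.mulVec y) * (star v ⬝ᵥ M.mulVec v)
      + (star x ⬝ᵥ E2.mulVec x) * (star y ⬝ᵥ E2.mulVec y) * (star v ⬝ᵥ N.mulVec v) := by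
  rw [add_mulVec, add_mulVec, add_mulVec, dotProduct_add, dotProduct_add, dotProduct_add]
  rw [kron_quad' (E1 ⊗ₖ E1) K (fun q => x q.1 * y q.2) v,
    kron_quad' (E1 ⊗ₖ E2) L (fun q => x q.1 * y q.2) v,
    kron_quad' (E2 ⊗ₖ E1) M (fun q => x q.1 * y q.2) v,
    kron_quad' (E2 ⊗ₖ E2) N (fun q => x q.1 * y q.2) v,
    kron_quad', kron_quad', kron_quad', kron_quad']

/-- the symmetrized six-factor operator built from `Φ` and
`(I − Φ)/(d² − 1)` is positive semidefinite with partial trace over `A'B'` equal to the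
identity if and only if `K, L, M, N` are positive semidefinite with `K+L+M+N = d²·I`. -/
theorem stmt10 (d : ℕ) (hd : 2 ≤ d) {AH BH : Type}
    [Fintype AH] [DecidableEq AH] [Fintype BH] [DecidableEq BH]
    (K L M N : Matrix (AH × BH) (AH × BH) ℂ)
    (hK : K.IsHermitian) (hL : L.IsHermitian) (hM : M.IsHermitian) (hN : N.IsHermitian) :
    ((bigOp d (phiD d) ((((d : ℂ)) ^ 2 - 1)⁻¹ • (1 - phiD d)) K L M N).PosSemidef ∧
      ptrR (bigOp d (phiD d) ((((d : ℂ)) ^ 2 - 1)⁻¹ • (1 - phiD d)) K L M N) = 1)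
      ↔
    (K.PosSemidef ∧ L.PosSemidef ∧ M.PosSemidef ∧ N.PosSemidef ∧
      K + L + M + N = ((d : ℂ) ^ 2) • 1) := by
  have hd0 : d ≠ 0 := by omega
  have hdc0 : (d : ℂ) ≠ 0 := Nat.cast_ne_zero.mpr hd0
  have hdr : (0 : ℝ) < (d : ℝ) := by exact_mod_cast Nat.pos_of_ne_zero hd0
  have hrpos : (0 : ℝ) < (d : ℝ) ^ 2 - 1 := by
    have h2 : (2 : ℝ) ≤ (d : ℝ) := by exact_mod_cast hd
    nlinarith
  have hcne : ((d : ℂ) ^ 2 - 1) ≠ 0 := by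
    rw [show ((d : ℂ) ^ 2 - 1) = (((d : ℝ) ^ 2 - 1 : ℝ) : ℂ) from by push_cast; ring]
    exact Complex.ofReal_ne_zero.mpr (ne_of_gt hrpos)
  have hent : ∀ (a b : Fin d) (h : AH × BH) (a₂ b₂ : Fin d) (h₂ : AH × BH),
      ptrR (bigOp d (phiD d) ((((d : ℂ)) ^ 2 - 1)⁻¹ • (1 - phiD d)) K L M N)
          ((a, b), h) ((a₂, b₂), h₂)
        = ((d : ℂ)⁻¹ * (if a = a₂ then 1 else 0)) * ((d : ℂ)⁻¹ * (if b = b₂ then 1 else 0)) *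
            (K h h₂ + L h h₂ + M h h₂ + N h h₂) := by
    intro a b h a₂ b₂ h₂
    show (∑ k : Fin d × Fin d,
      bigOp d (phiD d) ((((d : ℂ)) ^ 2 - 1)⁻¹ • (1 - phiD d)) K L M N
        (((a, b), h), k) (((a₂, b₂), h₂), k)) = _
    simp only [bigOp, of_apply]
    rw [Fintype.sum_prod_type]
    simp only [Finset.sum_add_distrib]
    rw [sum_fact, sum_fact, sum_fact, sum_fact, ptr_phi, ptr_phi, ptr_E2 d hd, ptr_E2 d hd]
    ring
  have trace_iff : ptrR (bigOp d (phiD d) ((((d : ℂ)) ^ 2 - 1)⁻¹ • (1 - phiD d)) K L M N) = 1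
      ↔ K + L + M + N = ((d : ℂ) ^ 2) • 1 := by
    constructor
    · intro htr
      ext h h₂
      have e := Matrix.ext_iff.mpr htr ((⟨0, by omega⟩, ⟨0, by omega⟩), h)
        ((⟨0, by omega⟩, ⟨0, by omega⟩), h₂)
      rw [hent] at e
      simp only [if_pos rfl, mul_one, one_apply, Prod.mk.injEq, true_and] at e
      simp only [Matrix.add_apply, Matrix.smul_apply, one_apply, smul_eq_mul]
      by_cases hh : h = h₂
      · simp only [hh, if_pos rfl, mul_one, if_true, eq_self_iff_true] at e ⊢
        field_simp at e
        linear_combination e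
      · simp only [hh, if_neg hh, if_false, mul_zero] at e ⊢
        field_simp at e
        split_ifs at e with hT
        · linear_combination e
        · exact absurd trivial hT
    · intro hsum
      ext ⟨⟨a, b⟩, h⟩ ⟨⟨a₂, b₂⟩, h₂⟩
      rw [hent]
      have e := Matrix.ext_iff.mpr hsum h h₂
      simp only [Matrix.add_apply, Matrix.smul_apply, one_apply, smul_eq_mul] at e
      rw [e, one_apply]
      by_cases ha : a = a₂ <;> by_cases hb : b = b₂ <;> by_cases hh : h = h₂ <;>
        (try simp [ha, hb, hh, Prod.ext_iff]) <;> (try field_simp) <;> (try ring)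
  constructor
  · rintro ⟨hP, htr⟩
    rw [bigOp_eq] at hP
    have hS := (posSemidef_submatrix_equiv (reIdx d AH BH)).mp hP
    have qE1g : star (gamV d) ⬝ᵥ (phiD d).mulVec (gamV d) = (d : ℂ) := by
      rw [phi_mulVec_gamV d hd0, gamV_dot]
    have qE2g : star (gamV d) ⬝ᵥ (((((d : ℂ)) ^ 2 - 1)⁻¹ • (1 - phiD d)).mulVec (gamV d)) = 0 := by
      rw [Matrix.smul_mulVec, sub_mulVec, one_mulVec, phi_mulVec_gamV d hd0, sub_self,
        smul_zero, dotProduct_zero]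
    have qE1e : star (eV d hd) ⬝ᵥ (phiD d).mulVec (eV d hd) = 0 := by
      rw [phi_mulVec_eV d hd, dotProduct_zero]
    have qE2e : star (eV d hd) ⬝ᵥ (((((d : ℂ)) ^ 2 - 1)⁻¹ • (1 - phiD d)).mulVec (eV d hd))
        = ((d : ℂ) ^ 2 - 1)⁻¹ := by
      rw [Matrix.smul_mulVec, sub_mulVec, one_mulVec, phi_mulVec_eV d hd, sub_zero,
        dotProduct_smul, eV_dot, smul_eq_mul, mul_one]
    refine ⟨.of_dotProduct_mulVec_nonneg hK fun v => ?_, .of_dotProduct_mulVec_nonneg hL fun v => ?_,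
        .of_dotProduct_mulVec_nonneg hM fun v => ?_, .of_dotProduct_mulVec_nonneg hN fun v => ?_,
      trace_iff.mp htr⟩
    · have h0 := hS.dotProduct_mulVec_nonneg (fun p => (fun q : (Fin d × Fin d) × (Fin d × Fin d) =>
        gamV d q.1 * gamV d q.2) p.1 * v p.2)
      rw [quadS] at h0
      rw [qE1g, qE2g] at h0
      simp only [zero_mul, mul_zero, add_zero, zero_add] at h0
      refine pos_of_smul (a := (d : ℝ) * (d : ℝ)) (by nlinarith) ?_
      push_cast
      exact h0
    · have h0 := hS.dotProduct_mulVec_nonneg (fun p => (fun q : (Fin d × Fin d) × (Fin d × Fin d) =>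
        gamV d q.1 * eV d hd q.2) p.1 * v p.2)
      rw [quadS] at h0
      rw [qE1g, qE2g, qE1e, qE2e] at h0
      simp only [zero_mul, mul_zero, add_zero, zero_add] at h0
      refine pos_of_smul (a := (d : ℝ) * ((d : ℝ) ^ 2 - 1)⁻¹) (by positivity) ?_
      push_cast
      exact h0
    · have h0 := hS.dotProduct_mulVec_nonneg (fun p => (fun q : (Fin d × Fin d) × (Fin d × Fin d) =>
        eV d hd q.1 * gamV d q.2) p.1 * v p.2)
      rw [quadS] at h0
      rw [qE1g, qE2g, qE1e, qE2e] at h0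
      simp only [zero_mul, mul_zero, add_zero, zero_add] at h0
      refine pos_of_smul (a := ((d : ℝ) ^ 2 - 1)⁻¹ * (d : ℝ)) (by positivity) ?_
      push_cast
      exact h0
    · have h0 := hS.dotProduct_mulVec_nonneg (fun p => (fun q : (Fin d × Fin d) × (Fin d × Fin d) =>
        eV d hd q.1 * eV d hd q.2) p.1 * v p.2)
      rw [quadS] at h0
      rw [qE1e, qE2e] at h0
      simp only [zero_mul, mul_zero, add_zero, zero_add] at h0
      refine pos_of_smul (a := ((d : ℝ) ^ 2 - 1)⁻¹ * ((d : ℝ) ^ 2 - 1)⁻¹) (by positivity) ?_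
      push_cast
      exact h0
  · rintro ⟨hK', hL', hM', hN', hsum⟩
    refine ⟨?_, trace_iff.mpr hsum⟩
    rw [bigOp_eq]
    refine (posSemidef_submatrix_equiv _).mpr ?_
    have hphi : (phiD d).PosSemidef := phi_psd d hd0
    have hE2 : (((((d : ℂ)) ^ 2 - 1)⁻¹ • (1 - phiD d))).PosSemidef := by
      rw [show ((d : ℂ) ^ 2 - 1)⁻¹ = ((((d : ℝ) ^ 2 - 1)⁻¹ : ℝ) : ℂ) from by push_cast; ring]
      exact psd_smul (one_sub_phi_psd d hd0) (le_of_lt (inv_pos.mpr hrpos))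
    exact (((psd_kron' (psd_kron' hphi hphi) hK').add
      (psd_kron' (psd_kron' hphi hE2) hL')).add
      (psd_kron' (psd_kron' hE2 hphi) hM')).add
      (psd_kron' (psd_kron' hE2 hE2) hN')

end
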